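/- Let p_j ∈ ℝ³ \ {0} satisfy ∑_j 1/‖p_j‖² < ∞. Then for almost every direction v ∈ S² (with respect to surface measure), the set of projections {Π_v(p_j)}_j ⊂ v^⊥ ≅ ℂ has no accumulation point in ℂ, i.e., for every R > 0 only finitely many j satisfy ‖Π_v(p_j)‖ ≤ R. -/

import Mathlib

open MeasureTheory

open Set
open scoped RealInnerProductSpace Pointwise ENNReal

lemma norm_proj_eq (v u : EuclideanSpace ℝ (Fin 3)) (hv : ‖v‖ = 1) (hu : ‖u‖ = 1)
    (c : ℝ) (hc : 0 ≤ c) :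
    ‖c • u - ⟪v, c • u⟫ • v‖ = c * ‖v - ⟪u, v⟫ • u‖ := by
  have h1 : ‖c • u - ⟪v, c • u⟫ • v‖ ^ 2 = c^2 - (c * ⟪v, u⟫)^2 := by
    rw [real_inner_smul_right, norm_sub_sq_real, real_inner_smul_left, real_inner_smul_right,
      norm_smul, norm_smul, real_inner_comm u v]
    simp [hu, hv, mul_pow, sq_abs]
    ring
  have h2 : ‖v - ⟪u, v⟫ • u‖ ^ 2 = 1 - ⟪u, v⟫^2 := by
    rw [norm_sub_sq_real, real_inner_smul_right, norm_smul, real_inner_comm u v]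
    simp [hv, hu, mul_pow, sq_abs]
    ring
  have hsq : ‖c • u - ⟪v, c • u⟫ • v‖ ^ 2 = (c * ‖v - ⟪u, v⟫ • u‖) ^ 2 := by
    rw [h1, real_inner_comm u v]
    conv_rhs => rw [mul_pow, h2]
    ring
  have habs : |‖c • u - ⟪v, c • u⟫ • v‖| = |c * ‖v - ⟪u, v⟫ • u‖| :=
    (sq_eq_sq_iff_abs_eq_abs _ _).mp hsq
  rwa [abs_of_nonneg (norm_nonneg _), abs_of_nonneg (by positivity)] at habs

lemma cap_bound (u : EuclideanSpace ℝ (Fin 3)) (hu : ‖u‖ = 1) (ε : ℝ) (hε : 0 ≤ ε) :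
    (volume : Measure (EuclideanSpace ℝ (Fin 3))).toSphere
      {v : Metric.sphere (0 : EuclideanSpace ℝ (Fin 3)) 1 |
        ‖(v : EuclideanSpace ℝ (Fin 3)) - ⟪u, (v : EuclideanSpace ℝ (Fin 3))⟫ • u‖ ≤ ε}
      ≤ ENNReal.ofReal (24 * ε ^ 2) := by
  set S : Set (Metric.sphere (0 : EuclideanSpace ℝ (Fin 3)) 1) :=
    {v | ‖(v : EuclideanSpace ℝ (Fin 3)) - ⟪u, (v : EuclideanSpace ℝ (Fin 3))⟫ • u‖ ≤ ε} with hSdef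
  have hS : MeasurableSet S := by
    have hcont : Continuous fun v : Metric.sphere (0 : EuclideanSpace ℝ (Fin 3)) 1 =>
        ‖(v : EuclideanSpace ℝ (Fin 3)) - ⟪u, (v : EuclideanSpace ℝ (Fin 3))⟫ • u‖ :=
      by fun_prop
    exact hcont.measurable measurableSet_Iic
  rw [Measure.toSphere_apply' _ hS]
  have hcard : Module.finrank ℝ (EuclideanSpace ℝ (Fin 3)) = Fintype.card (Fin 3) := by
    simp
  have horth : Orthonormal ℝ (({0} : Set (Fin 3)).restrict fun _ => u) := by
    refine ⟨fun i => hu, fun i j hij => absurd ?_ hij⟩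
    ext
    rw [Set.mem_singleton_iff.mp i.2, Set.mem_singleton_iff.mp j.2]
  obtain ⟨b, hb⟩ := horth.exists_orthonormalBasis_extension_of_card_eq hcard
  have hb0 : b 0 = u := hb 0 rfl
  set c : Fin 3 → ℝ := ![1, ε, ε] with hc
  set B : Set (EuclideanSpace ℝ (Fin 3)) := (MeasurableEquiv.toLp 2 (Fin 3 → ℝ)).symm ⁻¹'
      (Set.univ.pi fun i => Set.Icc (-(c i)) (c i)) with hB
  have hBpre : B = (MeasurableEquiv.toLp 2 (Fin 3 → ℝ)).symm ⁻¹'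
      (Set.univ.pi fun i => Set.Icc (-(c i)) (c i)) := rfl
  have hBmeas : MeasurableSet B := by
    rw [hBpre]
    exact (MeasurableEquiv.toLp 2 (Fin 3 → ℝ)).symm.measurable
      (MeasurableSet.univ_pi fun i => measurableSet_Icc)
  have hsub : Set.Ioo (0:ℝ) 1 • (Subtype.val '' S) ⊆ b.repr ⁻¹' B := by
    rintro x hx
    rw [Set.mem_smul] at hx
    obtain ⟨r, hr, y, ⟨v, hvS, rfl⟩, rfl⟩ := hx
    have hvnorm : ‖(v : EuclideanSpace ℝ (Fin 3))‖ = 1 := by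
      simpa using mem_sphere_zero_iff_norm.mp v.2
    intro i _
    rw [Set.mem_Icc, ← abs_le]
    change |(b.repr (r • (v : EuclideanSpace ℝ (Fin 3)))).ofLp i| ≤ c i
    rw [b.repr_apply_apply]
    have hsym : ‖u - ⟪(v : EuclideanSpace ℝ (Fin 3)), u⟫ • (v : EuclideanSpace ℝ (Fin 3))‖
        = ‖(v : EuclideanSpace ℝ (Fin 3)) - ⟪u, (v : EuclideanSpace ℝ (Fin 3))⟫ • u‖ := by
      have := norm_proj_eq v u hvnorm hu 1 zero_le_one
      simpa using this
    have hkey : ‖r • (v : EuclideanSpace ℝ (Fin 3))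
        - ⟪u, r • (v : EuclideanSpace ℝ (Fin 3))⟫ • u‖ ≤ r * ε := by
      rw [norm_proj_eq u (v : EuclideanSpace ℝ (Fin 3)) hu hvnorm r hr.1.le, hsym]
      exact mul_le_mul_of_nonneg_left hvS hr.1.le
    fin_cases i
    · -- |⟪b 0, r • v⟫| ≤ 1
      calc |⟪b 0, r • (v : EuclideanSpace ℝ (Fin 3))⟫| ≤ ‖b 0‖ * ‖r • (v : EuclideanSpace ℝ (Fin 3))‖ :=
            abs_real_inner_le_norm _ _
        _ ≤ 1 := by
            rw [b.orthonormal.1 0, one_mul, norm_smul, hvnorm, mul_one, Real.norm_eq_abs,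
              abs_of_pos hr.1]
            exact hr.2.le
    · have hortho : ⟪b 1, u⟫ = 0 := by rw [← hb0]; exact b.orthonormal.2 (by decide)
      calc |⟪b 1, r • (v : EuclideanSpace ℝ (Fin 3))⟫|
          = |⟪b 1, r • (v : EuclideanSpace ℝ (Fin 3)) - ⟪u, r • (v : EuclideanSpace ℝ (Fin 3))⟫ • u⟫| := by
            rw [inner_sub_right, real_inner_smul_right (b 1) u, hortho, mul_zero, sub_zero]
        _ ≤ ‖b 1‖ * ‖r • (v : EuclideanSpace ℝ (Fin 3)) - ⟪u, r • (v : EuclideanSpace ℝ (Fin 3))⟫ • u‖ :=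
            abs_real_inner_le_norm _ _
        _ ≤ ε := by
            rw [b.orthonormal.1 1, one_mul]
            exact hkey.trans (by nlinarith [hr.1.le, hr.2.le])
    · have hortho : ⟪b 2, u⟫ = 0 := by rw [← hb0]; exact b.orthonormal.2 (by decide)
      calc |⟪b 2, r • (v : EuclideanSpace ℝ (Fin 3))⟫|
          = |⟪b 2, r • (v : EuclideanSpace ℝ (Fin 3)) - ⟪u, r • (v : EuclideanSpace ℝ (Fin 3))⟫ • u⟫| := by
            rw [inner_sub_right, real_inner_smul_right (b 2) u, hortho, mul_zero, sub_zero]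
        _ ≤ ‖b 2‖ * ‖r • (v : EuclideanSpace ℝ (Fin 3)) - ⟪u, r • (v : EuclideanSpace ℝ (Fin 3))⟫ • u‖ :=
            abs_real_inner_le_norm _ _
        _ ≤ ε := by
            rw [b.orthonormal.1 2, one_mul]
            exact hkey.trans (by nlinarith [hr.1.le, hr.2.le])
  have hvolB : volume B = ENNReal.ofReal 2 * (ENNReal.ofReal (2*ε) * ENNReal.ofReal (2*ε)) := by
    rw [hBpre, (EuclideanSpace.volume_preserving_symm_measurableEquiv_toLp (Fin 3)).measure_preimage
      (MeasurableSet.univ_pi fun i => measurableSet_Icc).nullMeasurableSet,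
      volume_pi_pi]
    simp only [Real.volume_Icc, hc]
    rw [Fin.prod_univ_three]
    norm_num [Matrix.cons_val_two, Matrix.vecHead, Matrix.vecTail]
    rw [← two_mul, ENNReal.ofReal_mul (zero_le_two : (0:ℝ) ≤ 2), ENNReal.ofReal_ofNat]
    ring_nf
  calc (Module.finrank ℝ (EuclideanSpace ℝ (Fin 3)) : ℝ≥0∞)
        * volume (Set.Ioo (0:ℝ) 1 • (Subtype.val '' S))
      ≤ 3 * volume (b.repr ⁻¹' B) := by
        rw [finrank_euclideanSpace_fin]
        exact mul_le_mul_right (measure_mono hsub) _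
    _ = 3 * volume B := by rw [b.measurePreserving_repr.measure_preimage hBmeas.nullMeasurableSet]
    _ ≤ ENNReal.ofReal (24 * ε ^ 2) := by
        rw [hvolB, ← ENNReal.ofReal_mul (by positivity), ← ENNReal.ofReal_mul (by positivity)]
        rw [show (3 : ℝ≥0∞) = ENNReal.ofReal 3 by norm_num, ← ENNReal.ofReal_mul (by positivity)]
        exact ENNReal.ofReal_le_ofReal (le_of_eq (by ring))

/-- If `∑_j 1/‖p_j‖² < ∞`, then for almost every direction `v ∈ S²` the set of
orthogonal projections `Π_v(p_j)` onto `v^⊥` has no accumulation point: for every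
`R > 0` only finitely many `j` satisfy `‖Π_v(p_j)‖ ≤ R`. -/
theorem stmt8 (p : ℕ → EuclideanSpace ℝ (Fin 3)) (hne : ∀ j, p j ≠ 0)
    (hsum : Summable fun j : ℕ => 1 / ‖p j‖ ^ 2) :
    ∀ᵐ v : Metric.sphere (0 : EuclideanSpace ℝ (Fin 3)) 1
        ∂(volume : Measure (EuclideanSpace ℝ (Fin 3))).toSphere,
      ∀ R : ℝ, 0 < R →
        {j : ℕ |
          ‖(Submodule.orthogonalProjectionOnto ((ℝ ∙ (v : EuclideanSpace ℝ (Fin 3)))ᗮ) (p j) :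
              (ℝ ∙ (v : EuclideanSpace ℝ (Fin 3)))ᗮ)‖ ≤ R}.Finite := by
  set u : ℕ → EuclideanSpace ℝ (Fin 3) := fun j => ‖p j‖⁻¹ • p j with hu
  have hpj : ∀ j, (0:ℝ) < ‖p j‖ := fun j => norm_pos_iff.mpr (hne j)
  have hun : ∀ j, ‖u j‖ = 1 := fun j => norm_smul_inv_norm (hne j)
  set s : ℕ → ℕ → Set (Metric.sphere (0 : EuclideanSpace ℝ (Fin 3)) 1) := fun n j =>
    {v | ‖(v : EuclideanSpace ℝ (Fin 3)) - ⟪u j, (v : EuclideanSpace ℝ (Fin 3))⟫ • u j‖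
      ≤ ((n:ℝ)+1) / ‖p j‖} with hs
  have key : ∀ n : ℕ, ∀ᵐ v ∂(volume : Measure (EuclideanSpace ℝ (Fin 3))).toSphere,
      {j | v ∈ s n j}.Finite := by
    intro n
    apply MeasureTheory.ae_finite_setOf_mem
    have hbound : ∀ j, (volume : Measure (EuclideanSpace ℝ (Fin 3))).toSphere (s n j)
        ≤ ENNReal.ofReal ((24 * ((n:ℝ)+1)^2) * (1 / ‖p j‖^2)) := by
      intro j
      have h := cap_bound (u j) (hun j) (((n:ℝ)+1) / ‖p j‖) (by positivity)
      refine h.trans (le_of_eq ?_)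
      congr 1
      field_simp
    have hsummable : Summable fun j => (24 * ((n:ℝ)+1)^2) * (1 / ‖p j‖^2) := hsum.mul_left _
    have hnonneg : ∀ j, 0 ≤ (24 * ((n:ℝ)+1)^2) * (1 / ‖p j‖^2) := fun j => by positivity
    exact ne_top_of_le_ne_top ENNReal.ofReal_ne_top
      ((ENNReal.tsum_le_tsum hbound).trans
        (le_of_eq (ENNReal.ofReal_tsum_of_nonneg hnonneg hsummable).symm))
  filter_upwards [ae_all_iff.mpr key] with v hv R hR
  set n : ℕ := ⌈R⌉₊ with hn
  have hRn : R ≤ (n:ℝ) + 1 := (Nat.le_ceil R).trans (by linarith)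
  apply (hv n).subset
  intro j hj
  simp only [Set.mem_setOf_eq] at hj ⊢
  have hvnorm : ‖(v : EuclideanSpace ℝ (Fin 3))‖ = 1 := by
    simpa using mem_sphere_zero_iff_norm.mp v.2
  have hproj : ‖(Submodule.orthogonalProjectionOnto ((ℝ ∙ (v : EuclideanSpace ℝ (Fin 3)))ᗮ) (p j) :
      (ℝ ∙ (v : EuclideanSpace ℝ (Fin 3)))ᗮ)‖
      = ‖p j - ⟪(v : EuclideanSpace ℝ (Fin 3)), p j⟫ • (v : EuclideanSpace ℝ (Fin 3))‖ := by
    rw [Submodule.coe_norm, Submodule.coe_orthogonalProjectionOnto_apply,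
      Submodule.starProjection_orthogonal_val, Submodule.starProjection_unit_singleton ℝ hvnorm]
  have hpu : p j = ‖p j‖ • u j := by
    rw [hu, smul_smul, mul_inv_cancel₀ (hpj j).ne', one_smul]
  have hnorm_eq : ‖p j - ⟪(v : EuclideanSpace ℝ (Fin 3)), p j⟫ • (v : EuclideanSpace ℝ (Fin 3))‖
      = ‖p j‖ * ‖(v : EuclideanSpace ℝ (Fin 3)) - ⟪u j, (v : EuclideanSpace ℝ (Fin 3))⟫ • u j‖ := by
    conv_lhs => rw [hpu]
    exact norm_proj_eq (v : EuclideanSpace ℝ (Fin 3)) (u j) hvnorm (hun j) ‖p j‖ (norm_nonneg _)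
  rw [hproj, hnorm_eq] at hj
  show ‖(v : EuclideanSpace ℝ (Fin 3)) - ⟪u j, (v : EuclideanSpace ℝ (Fin 3))⟫ • u j‖
    ≤ ((n:ℝ)+1) / ‖p j‖
  rw [le_div_iff₀ (hpj j), mul_comm]
  exact hj.trans hRn
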